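/- Let h : ℝ² → ℝ be a harmonic function (C^∞ with Δh = 0 everywhere) that is not identically zero. Then the zero set h⁻¹(0) has no connected component homeomorphic to the circle S¹; equivalently, a nonzero entire harmonic function on the plane has no nodal ovals, and in particular its nodal set contains no double nest. -/

import Mathlib

noncomputable section
open Metric Set Bornology

/-- The Euclidean plane. -/
abbrev Plane := EuclideanSpace ℝ (Fin 2)

/-- The Euclidean Laplacian `Δf = ∂²f/∂x² + ∂²f/∂y²` of `f : ℝ² → ℝ`. -/
def lap (f : Plane → ℝ) (x : Plane) : ℝ :=
  ∑ i : Fin 2,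
    fderiv ℝ (fun y => fderiv ℝ f y (EuclideanSpace.single i 1)) x (EuclideanSpace.single i 1)

/-- A nodal oval of `u` : a connected component of the zero set `u⁻¹(0)` that is
homeomorphic to the circle `S¹`. -/
def IsNodalOval (u : Plane → ℝ) (γ : Set Plane) : Prop :=
  (∃ x ∈ u ⁻¹' {0}, γ = connectedComponentIn (u ⁻¹' {0}) x) ∧ Nonempty (γ ≃ₜ Circle)

/-- `D` is a bounded connected component of the complement of `γ` (the "inside" `D(γ)`
of a nodal oval, by the Jordan curve theorem). -/
def IsInnerDisk (γ D : Set Plane) : Prop :=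
  IsBounded D ∧ ∃ x ∈ γᶜ, D = connectedComponentIn γᶜ x

/-- A double nest: an ordered pair `(γin, γout)` of distinct nodal ovals of `u` with
`closure (D(γin)) ⊆ D(γout)`. -/
def IsDoubleNest (u : Plane → ℝ) (γin γout : Set Plane) : Prop :=
  IsNodalOval u γin ∧ IsNodalOval u γout ∧ γin ≠ γout ∧
    ∃ Din Dout, IsInnerDisk γin Din ∧ IsInnerDisk γout Dout ∧ closure Din ⊆ Dout

/-- The set of double nests of `u`, whose cardinality is `N_dn(u)`. -/
def doubleNests (u : Plane → ℝ) : Set (Set Plane × Set Plane) :=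
  {p | IsDoubleNest u p.1 p.2}

lemma clopen_sandwich {X : Type*} [TopologicalSpace X] [T2Space X] [CompactSpace X]
    (x : X) {U : Set X} (hU : IsOpen U) (hcc : connectedComponent x ⊆ U) :
    ∃ V, IsClopen V ∧ x ∈ V ∧ V ⊆ U := by
  have hcompl : IsCompact Uᶜ := hU.isClosed_compl.isCompact
  have H1 : ¬ ∀ t : Finset { s : Set X // IsClopen s ∧ x ∈ s },
      (Uᶜ ∩ ⋂ i ∈ t, (i : Set X)).Nonempty := by
    intro hforall
    have := hcompl.inter_iInter_nonempty
      (fun s : { s : Set X // IsClopen s ∧ x ∈ s } => (s : Set X)) (fun s => s.2.1.1) hforall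
    rw [← connectedComponent_eq_iInter_isClopen x] at this
    obtain ⟨y, hyU, hyc⟩ := this
    exact hyU (hcc hyc)
  push_neg at H1
  obtain ⟨t, ht⟩ := H1
  refine ⟨⋂ i ∈ t, (i : Set X), isClopen_biInter_finset fun i _ => i.2.1,
    Set.mem_iInter₂.2 fun i _ => i.2.2, fun y hy => ?_⟩
  by_contra hyU
  exact Set.eq_empty_iff_forall_notMem.1 ht y ⟨hyU, hy⟩

lemma part1' {Z : Set Plane} (hZc : IsClosed Z) {x : Plane} (hxZ : x ∈ Z)
    (hγcomp : IsCompact (connectedComponentIn Z x)) :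
    ∃ U : Set Plane, IsOpen U ∧ IsBounded U ∧ x ∈ U ∧ ∀ y ∈ frontier U, y ∉ Z := by
  have hxγ : x ∈ connectedComponentIn Z x := mem_connectedComponentIn hxZ
  obtain ⟨R, hR0, hγR⟩ : ∃ R, 0 < R ∧ connectedComponentIn Z x ⊆ ball 0 R := by
    obtain ⟨r, hr⟩ := hγcomp.isBounded.subset_ball (0 : Plane)
    refine ⟨|r| + 1, by positivity, hr.trans (ball_subset_ball ?_)⟩
    have := le_abs_self r; linarith
  have hsub : ball (0 : Plane) (R + 1) ⊆ closedBall 0 (R + 2) :=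
    (ball_subset_ball (by linarith)).trans ball_subset_closedBall
  have hsub' : ball (0 : Plane) R ⊆ closedBall 0 (R + 2) :=
    (ball_subset_ball (by linarith)).trans hsub
  obtain ⟨K, hKdef⟩ : ∃ K, K = Z ∩ closedBall 0 (R + 2) := ⟨_, rfl⟩
  have hKcomp : IsCompact K := hKdef ▸ (isCompact_closedBall 0 (R + 2)).inter_left hZc
  have hxK : x ∈ K := hKdef ▸ ⟨hxZ, hsub' (hγR hxγ)⟩
  have hγK : connectedComponentIn Z x = connectedComponentIn K x := by
    apply Subset.antisymm
    · refine IsPreconnected.subset_connectedComponentIn isPreconnected_connectedComponentIn hxγ ?_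
      intro y hy
      exact hKdef ▸ ⟨connectedComponentIn_subset Z x hy, hsub' (hγR hy)⟩
    · refine IsPreconnected.subset_connectedComponentIn isPreconnected_connectedComponentIn
        (mem_connectedComponentIn hxK) ?_
      exact (connectedComponentIn_subset K x).trans (hKdef ▸ inter_subset_left)
  haveI : CompactSpace K := isCompact_iff_compactSpace.1 hKcomp
  have himg : Subtype.val '' connectedComponent (⟨x, hxK⟩ : K) = connectedComponentIn Z x := by
    rw [hγK, connectedComponentIn_eq_image hxK]
  have hccO : connectedComponent (⟨x, hxK⟩ : K) ⊆ Subtype.val ⁻¹' (ball (0 : Plane) (R + 1)) := by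
    intro w hw
    have hwγ : (w : Plane) ∈ connectedComponentIn Z x := himg ▸ mem_image_of_mem _ hw
    have : (w : Plane) ∈ ball (0 : Plane) (R + 1) :=
      ball_subset_ball (show R ≤ R + 1 by linarith) (hγR hwγ)
    exact mem_preimage.2 this
  obtain ⟨V, hVclopen, hpV, hVO⟩ := clopen_sandwich (⟨x, hxK⟩ : K)
    (isOpen_ball.preimage continuous_subtype_val) hccO
  obtain ⟨F, hFdef⟩ : ∃ F, F = Subtype.val '' V := ⟨_, rfl⟩
  have hFcomp : IsCompact F := hFdef ▸ (hVclopen.1.isCompact).image continuous_subtype_val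
  have hxF : x ∈ F := hFdef ▸ ⟨⟨x, hxK⟩, hpV, rfl⟩
  have hFball : F ⊆ ball 0 (R + 1) := by
    rw [hFdef]; rintro y ⟨w, hwV, rfl⟩; exact hVO hwV
  obtain ⟨K2, hK2def⟩ : ∃ K2, K2 = K \ F := ⟨_, rfl⟩
  have hK2comp : IsCompact K2 := by
    have : K2 = Subtype.val '' (Vᶜ : Set K) := by
      rw [hK2def, hFdef]
      ext y
      constructor
      · rintro ⟨hyK, hyF⟩
        exact ⟨⟨y, hyK⟩, fun hmem => hyF ⟨⟨y, hyK⟩, hmem, rfl⟩, rfl⟩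
      · rintro ⟨w, hwV, rfl⟩
        exact ⟨w.2, fun ⟨w', hw'V, hww'⟩ => hwV (by rwa [← Subtype.ext hww'.symm] at hw'V)⟩
    rw [this]
    exact (hVclopen.2.isClosed_compl.isCompact).image continuous_subtype_val
  have hdisj : Disjoint F K2 := hK2def ▸ disjoint_sdiff_self_right
  have hO'open : IsOpen (K2ᶜ ∩ ball (0 : Plane) (R + 1)) :=
    (hK2comp.isClosed.isOpen_compl).inter isOpen_ball
  have hFO' : F ⊆ K2ᶜ ∩ ball 0 (R + 1) :=
    fun y hy => ⟨fun hy2 => (disjoint_left.1 hdisj) hy hy2, hFball hy⟩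
  obtain ⟨ε, hε, hthick⟩ := hFcomp.exists_thickening_subset_open hO'open hFO'
  have hclU : closure (thickening (ε / 2) F) ⊆ K2ᶜ ∩ ball 0 (R + 1) :=
    (closure_thickening_subset_cthickening _ _).trans
      ((cthickening_subset_thickening' hε (by linarith) F).trans hthick)
  refine ⟨thickening (ε / 2) F, isOpen_thickening,
    (isBounded_ball).subset ((subset_closure.trans hclU).trans inter_subset_right),
    self_subset_thickening (by linarith) F hxF, ?_⟩
  intro y hyfr hyZ
  have hyclU : y ∈ closure (thickening (ε / 2) F) := frontier_subset_closure hyfr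
  have hyK : y ∈ K := hKdef ▸ ⟨hyZ, hsub (hclU hyclU).2⟩
  have hynK2 : y ∉ K2 := (hclU hyclU).1
  have hyF : y ∈ F := by
    by_contra hyF
    exact hynK2 (hK2def ▸ ⟨hyK, hyF⟩)
  have hyU : y ∈ thickening (ε / 2) F := self_subset_thickening (by linarith) F hyF
  rw [isOpen_thickening.frontier_eq] at hyfr
  exact hyfr.2 hyU

lemma lemC (f : ℂ → ℂ) (hf : Differentiable ℂ f) {U : Set ℂ} (hUo : IsOpen U)
    (hUb : IsBounded U) {p : ℂ} (hp : p ∈ U) (hp0 : (f p).re = 0)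
    (hfr : ∀ z ∈ frontier U, (f z).re ≠ 0) : False := by
  -- frontier U is nonempty and compact
  have hUne : U.Nonempty := ⟨p, hp⟩
  have hfrne : (frontier U).Nonempty := by
    by_contra hemp
    rw [not_nonempty_iff_eq_empty] at hemp
    have hclopen : IsClopen U := isClopen_iff_frontier_eq_empty.2 hemp
    rcases (isClopen_iff.1 hclopen) with rfl | rfl
    · exact hUne.ne_empty rfl
    · obtain ⟨r, hr⟩ := hUb.subset_ball (0 : ℂ)
      have : ((|r| + 1 : ℝ) : ℂ) ∈ ball (0 : ℂ) r := hr (mem_univ _)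
      rw [mem_ball_zero_iff] at this
      simp only [Complex.norm_real, Real.norm_eq_abs, abs_abs] at this
      have h1 : |(|r| + 1)| = |r| + 1 := abs_of_pos (by positivity)
      rw [h1] at this
      linarith [le_abs_self r]
  have hclUcomp : IsCompact (closure U) := Metric.isCompact_iff_isClosed_bounded.2 ⟨isClosed_closure, hUb.closure⟩
  have hfrcomp : IsCompact (frontier U) :=
    hclUcomp.of_isClosed_subset isClosed_frontier frontier_subset_closure
  -- minimum of |Re f| on the frontier
  have hcont : Continuous fun z => |(f z).re| :=
    (Complex.continuous_re.comp hf.continuous).abs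
  obtain ⟨z₀, hz₀fr, hz₀min⟩ := hfrcomp.exists_isMinOn hfrne hcont.continuousOn
  set m : ℝ := |(f z₀).re| with hmdef
  have hm0 : 0 < m := abs_pos.2 (hfr z₀ hz₀fr)
  -- open mapping dichotomy
  have hfa : AnalyticOnNhd ℂ f univ :=
    hf.differentiableOn.analyticOnNhd isOpen_univ
  rcases hfa.is_constant_or_isOpen isPreconnected_univ with ⟨w, hw⟩ | hopen
  · have h1 : f p = w := hw p (mem_univ p)
    have h2 : f z₀ = w := hw z₀ (mem_univ z₀)
    exact hfr z₀ hz₀fr (by rw [h2, ← h1, hp0])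
  -- open case
  set V : Set ℂ := U ∩ (fun z => |(f z).re|) ⁻¹' (Iio m) with hVdef
  have hVo : IsOpen V := hUo.inter (isOpen_Iio.preimage hcont)
  have hpV : p ∈ V := ⟨hp, by simp [hp0, hm0]⟩
  have hO : IsOpen (f '' V) := hopen V (subset_univ V) hVo
  -- closure of the image
  have hclVcomp : IsCompact (closure V) :=
    hclUcomp.of_isClosed_subset isClosed_closure (closure_mono inter_subset_left)
  have hfclV : IsCompact (f '' closure V) := hclVcomp.image hf.continuous
  have hOsub : closure (f '' V) ⊆ f '' closure V :=
    closure_minimal (image_mono subset_closure) hfclV.isClosed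
  -- the vertical ray
  set q : ℂ := f p with hqdef
  have hqO : q ∈ f '' V := mem_image_of_mem f hpV
  obtain ⟨r, hrO⟩ := hfclV.isBounded.subset_ball (0 : ℂ)
  set B : Set ℝ := {t : ℝ | 0 ≤ t ∧ q + (t : ℂ) * Complex.I ∉ f '' V} with hBdef
  have hBne : B.Nonempty := by
    refine ⟨|r| + ‖q‖ + 1, by positivity, fun hmem => ?_⟩
    have h1 : q + ((|r| + ‖q‖ + 1 : ℝ) : ℂ) * Complex.I ∈ ball (0 : ℂ) r :=
      hrO (hOsub (subset_closure hmem))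
    rw [mem_ball_zero_iff] at h1
    have h2 : ‖((|r| + ‖q‖ + 1 : ℝ) : ℂ) * Complex.I‖ ≤ ‖q + ((|r| + ‖q‖ + 1 : ℝ) : ℂ) * Complex.I‖ + ‖q‖ := by
      have := norm_sub_le (q + ((|r| + ‖q‖ + 1 : ℝ) : ℂ) * Complex.I) q
      simpa using this
    have h3 : ‖((|r| + ‖q‖ + 1 : ℝ) : ℂ) * Complex.I‖ = |r| + ‖q‖ + 1 := by
      rw [norm_mul, Complex.norm_I, mul_one, Complex.norm_real, Real.norm_eq_abs,
        abs_of_pos (by positivity)]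
    nlinarith [le_abs_self r, norm_nonneg q]
  have hBclosed : IsClosed B := by
    have h1 : Continuous fun t : ℝ => q + (t : ℂ) * Complex.I := by continuity
    exact (isClosed_Ici.preimage continuous_id).inter (hO.isClosed_compl.preimage h1)
  have hBbdd : BddBelow B := ⟨0, fun t ht => ht.1⟩
  set c : ℝ := sInf B with hcdef
  have hcB : c ∈ B := hBclosed.csInf_mem hBne hBbdd
  have hc0 : 0 < c := by
    rcases lt_or_eq_of_le hcB.1 with h | h
    · exact h
    · exact absurd (h ▸ hcB.2) (by simpa using hqO)
  -- z* is in the closure of the image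
  set zs : ℂ := q + (c : ℂ) * Complex.I with hzsdef
  have hzscl : zs ∈ closure (f '' V) := by
    have htend : Filter.Tendsto (fun t : ℝ => q + (t : ℂ) * Complex.I) (nhdsWithin c (Iio c)) (nhds zs) := by
      apply Filter.Tendsto.mono_left _ nhdsWithin_le_nhds
      exact (Continuous.tendsto (by continuity) c)
    refine mem_closure_of_tendsto htend ?_
    filter_upwards [Ioo_mem_nhdsLT_of_mem (⟨hc0, le_refl c⟩ : c ∈ Ioc 0 c)] with t ht
    by_contra hnot
    have : c ≤ t := csInf_le hBbdd ⟨le_of_lt ht.1, hnot⟩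
    exact absurd ht.2 (not_lt.2 this)
  have hzsnot : zs ∉ f '' V := hcB.2
  -- find preimage point
  obtain ⟨w, hwclV, hfw⟩ := hOsub hzscl
  have hfwre : (f w).re = 0 := by
    have hzs : zs.re = 0 := by simp [hzsdef, hp0]
    rw [hfw]; exact hzs
  -- w is in U (not frontier), and then in V : contradiction
  have hwclU : w ∈ closure U := closure_mono inter_subset_left hwclV
  have hwU : w ∈ U := by
    by_contra hwnU
    exact hfr w ⟨hwclU, fun hint => hwnU (hUo.interior_eq ▸ hint)⟩ hfwre
  have hwV : w ∈ V := ⟨hwU, by simp [hfwre, hm0]⟩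
  exact hzsnot ⟨w, hwV, hfw⟩

/-- The coordinate identification `ℂ ≃ Plane`. -/
def eCLE : ℂ ≃L[ℝ] Plane := Complex.orthonormalBasisOneI.repr.toContinuousLinearEquiv

lemma eCLE_coe : (⇑eCLE : ℂ → Plane) = ⇑Complex.orthonormalBasisOneI.repr :=
  LinearIsometryEquiv.coe_toContinuousLinearEquiv _

lemma eCLE_norm (z : ℂ) : ‖(eCLE z : Plane)‖ = ‖z‖ := by
  rw [show eCLE z = Complex.orthonormalBasisOneI.repr z from congrFun eCLE_coe z]
  exact Complex.orthonormalBasisOneI.repr.norm_map z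

lemma eCLE_one : (eCLE 1 : Plane) = EuclideanSpace.single 0 1 := by
  rw [show eCLE 1 = Complex.orthonormalBasisOneI.repr 1 from congrFun eCLE_coe 1]
  have := Complex.orthonormalBasisOneI.repr_self 0
  simpa using this

lemma eCLE_I : (eCLE Complex.I : Plane) = EuclideanSpace.single 1 1 := by
  rw [show eCLE Complex.I = Complex.orthonormalBasisOneI.repr Complex.I from
    congrFun eCLE_coe Complex.I]
  have := Complex.orthonormalBasisOneI.repr_self 1
  simpa using this

/-- `h` transported to `ℂ`. -/
def HH (h : Plane → ℝ) : ℂ → ℝ := h ∘ ⇑eCLE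

/-- The putative derivative `∂H/∂x - i ∂H/∂y`. -/
def gg (h : Plane → ℝ) : ℂ → ℂ := fun z =>
  ((fderiv ℝ (HH h) z 1 : ℝ) : ℂ) - ((fderiv ℝ (HH h) z Complex.I : ℝ) : ℂ) * Complex.I

/-- Second derivative of `HH h`. -/
def DD (h : Plane → ℝ) : ℂ → ℂ →L[ℝ] ℂ →L[ℝ] ℝ := fderiv ℝ (fderiv ℝ (HH h))

/-- The putative derivative of `gg`. -/
def gd (h : Plane → ℝ) : ℂ → ℂ := fun z =>
  ((DD h z 1 1 : ℝ) : ℂ) - ((DD h z 1 Complex.I : ℝ) : ℂ) * Complex.I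

lemma top1 : ((⊤ : ℕ∞) : WithTop ℕ∞) + 1 ≤ ((⊤ : ℕ∞) : WithTop ℕ∞) := by
  exact_mod_cast le_top
lemma top2 : (1 : WithTop ℕ∞) ≤ ((⊤ : ℕ∞) : WithTop ℕ∞) := by exact_mod_cast le_top

section main
variable {h : Plane → ℝ} (hsmooth : ContDiff ℝ (⊤ : ℕ∞) h) (hharm : ∀ x, lap h x = 0)

include hsmooth

lemma HH_smooth : ContDiff ℝ (⊤ : ℕ∞) (HH h) :=
  hsmooth.comp (eCLE : ℂ →L[ℝ] Plane).contDiff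

lemma HH_fderiv_smooth : ContDiff ℝ (⊤ : ℕ∞) (fderiv ℝ (HH h)) :=
  (HH_smooth hsmooth).fderiv_right top1

lemma DD_cont : Continuous (DD h) :=
  ((HH_fderiv_smooth hsmooth).fderiv_right top1).continuous

lemma DD_hasFDerivAt (z : ℂ) : HasFDerivAt (fderiv ℝ (HH h)) (DD h z) z :=
  (((HH_fderiv_smooth hsmooth).differentiable (by simp)) z).hasFDerivAt

lemma DD_symm (z : ℂ) (v w : ℂ) : DD h z v w = DD h z w v :=
  second_derivative_symmetric_of_eventually_of_real
    (Filter.Eventually.of_forall fun y => (((HH_smooth hsmooth).differentiable (by simp)) y).hasFDerivAt)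
    (DD_hasFDerivAt hsmooth z) v w

-- fderiv of HH in terms of fderiv of h
lemma HH_fderiv_eq (z : ℂ) : fderiv ℝ (HH h) z = (fderiv ℝ h (eCLE z)).comp (eCLE : ℂ →L[ℝ] Plane) :=
  eCLE.comp_right_fderiv

-- second derivative transfer
lemma DD_eq (z u v : ℂ) :
    DD h z u v = fderiv ℝ (fun y => fderiv ℝ h y (eCLE v)) (eCLE z) (eCLE u) := by
  have hdh : Differentiable ℝ (fderiv ℝ h) := (hsmooth.fderiv_right top1).differentiable (by simp)
  have h1 : (fun w => fderiv ℝ (HH h) w v) = (fun y => fderiv ℝ h y (eCLE v)) ∘ ⇑eCLE := by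
    funext w
    rw [HH_fderiv_eq hsmooth w]
    rfl
  have h2 : fderiv ℝ (fun w => fderiv ℝ (HH h) w v) z = (DD h z).flip v := by
    rw [fderiv_clm_apply (((HH_fderiv_smooth hsmooth).differentiable (by simp)) z)
      (differentiableAt_const v)]
    simp [DD]
  have h3 : fderiv ℝ ((fun y => fderiv ℝ h y (eCLE v)) ∘ ⇑eCLE) z
      = (fderiv ℝ (fun y => fderiv ℝ h y (eCLE v)) (eCLE z)).comp (eCLE : ℂ →L[ℝ] Plane) :=
    eCLE.comp_right_fderiv
  have : (DD h z).flip v = (fderiv ℝ (fun y => fderiv ℝ h y (eCLE v)) (eCLE z)).comp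
      (eCLE : ℂ →L[ℝ] Plane) := by
    rw [← h2, h1, h3]
  have := congrFun (congrArg (fun (L : ℂ →L[ℝ] ℝ) => (L : ℂ → ℝ)) this) u
  simpa using this

include hharm

lemma DD_harm (z : ℂ) : DD h z 1 1 + DD h z Complex.I Complex.I = 0 := by
  have hl := hharm (eCLE z)
  rw [lap, Fin.sum_univ_two] at hl
  rw [DD_eq hsmooth z 1 1, DD_eq hsmooth z Complex.I Complex.I, eCLE_one, eCLE_I]
  exact hl

lemma DD_expand (z u v : ℂ) :
    DD h z u v = u.re * DD h z 1 v + u.im * DD h z Complex.I v := by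
  have hu : u = (u.re : ℝ) • (1 : ℂ) + (u.im : ℝ) • Complex.I := by
    simp [Complex.real_smul, Complex.re_add_im]
  conv_lhs => rw [hu]
  simp only [map_add, map_smul, ContinuousLinearMap.add_apply, ContinuousLinearMap.coe_smul',
    Pi.smul_apply, smul_eq_mul]

lemma gg_hasDerivAt (z : ℂ) : HasDerivAt (gg h) (gd h z) z := by
  have hA := DD_hasFDerivAt hsmooth z
  have hHx : HasFDerivAt (fun w => fderiv ℝ (HH h) w 1) ((DD h z).flip 1) z := by
    have := hA.clm_apply (hasFDerivAt_const (1 : ℂ) z)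
    simpa using this
  have hHy : HasFDerivAt (fun w => fderiv ℝ (HH h) w Complex.I) ((DD h z).flip Complex.I) z := by
    have := hA.clm_apply (hasFDerivAt_const (Complex.I) z)
    simpa using this
  have h1 : HasFDerivAt (fun w => ((fderiv ℝ (HH h) w 1 : ℝ) : ℂ))
      (Complex.ofRealCLM.comp ((DD h z).flip 1)) z :=
    Complex.ofRealCLM.hasFDerivAt.comp z hHx
  have h2 : HasFDerivAt (fun w => ((fderiv ℝ (HH h) w Complex.I : ℝ) : ℂ) * Complex.I)
      ((Complex.ofRealCLM.comp ((DD h z).flip Complex.I)).smulRight Complex.I) z :=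
    (Complex.ofRealCLM.hasFDerivAt.comp z hHy).mul_const' Complex.I
  have hg : HasFDerivAt (gg h)
      (Complex.ofRealCLM.comp ((DD h z).flip 1)
        - (Complex.ofRealCLM.comp ((DD h z).flip Complex.I)).smulRight Complex.I) z := h1.sub h2
  rw [hasDerivAt_iff_hasFDerivAt]
  apply hasFDerivAt_of_restrictScalars (h := hg)
  ext u
  have hrs : ((ContinuousLinearMap.toSpanSingleton ℂ (gd h z)).restrictScalars ℝ) u = u * gd h z := by
    simp [ContinuousLinearMap.smulRight_apply, smul_eq_mul]
  rw [hrs]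
  have e1 : DD h z u 1 = u.re * DD h z 1 1 + u.im * DD h z 1 Complex.I := by
    rw [DD_expand hsmooth hharm z u 1, DD_symm hsmooth z Complex.I 1]
  have e2 : DD h z u Complex.I = u.re * DD h z 1 Complex.I - u.im * DD h z 1 1 := by
    rw [DD_expand hsmooth hharm z u Complex.I]
    have : DD h z Complex.I Complex.I = -(DD h z 1 1) := by
      have := DD_harm hsmooth hharm z; linarith
    rw [this]; ring
  have lhs : (Complex.ofRealCLM.comp ((DD h z).flip 1)
        - (Complex.ofRealCLM.comp ((DD h z).flip Complex.I)).smulRight Complex.I) u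
      = ((DD h z u 1 : ℝ) : ℂ) - ((DD h z u Complex.I : ℝ) : ℂ) * Complex.I := by
    simp [ContinuousLinearMap.smulRight_apply, smul_eq_mul]
  rw [lhs, e1, e2]
  unfold gd
  apply Complex.ext <;> simp <;> ring

omit hharm in
lemma gg_cont : Continuous (gg h) :=
  ((Complex.continuous_ofReal.comp
      (((HH_fderiv_smooth hsmooth).continuous).clm_apply continuous_const)).sub
    ((Complex.continuous_ofReal.comp
      (((HH_fderiv_smooth hsmooth).continuous).clm_apply continuous_const)).mul continuous_const))

omit hharm in
lemma gd_cont : Continuous (gd h) :=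
  ((Complex.continuous_ofReal.comp
      (((DD_cont hsmooth).clm_apply continuous_const).clm_apply continuous_const)).sub
    ((Complex.continuous_ofReal.comp
      (((DD_cont hsmooth).clm_apply continuous_const).clm_apply continuous_const)).mul
      continuous_const))

end main

section primitive
variable {h : Plane → ℝ} (hsmooth : ContDiff ℝ (⊤ : ℕ∞) h) (hharm : ∀ x, lap h x = 0)

/-- A primitive of `gg h`, shifted so that its real part is `HH h`. -/
def ff (h : Plane → ℝ) : ℂ → ℂ := fun z =>
  (∫ t in (0:ℝ)..1, z * gg h ((t : ℂ) * z)) + ((HH h 0 : ℝ) : ℂ)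

include hsmooth hharm

lemma ff_hasDerivAt (z₀ : ℂ) : HasDerivAt (ff h) (gg h z₀) z₀ := by
  have hgc : Continuous (gg h) := gg_cont hsmooth
  have hdc : Continuous (gd h) := gd_cont hsmooth
  -- the inner continuous map
  have hcont2 : Continuous fun p : ℝ × ℂ => gg h ((p.1 : ℂ) * p.2) + p.2 * (gd h ((p.1 : ℂ) * p.2) * (p.1 : ℂ)) := by
    have hm : Continuous fun p : ℝ × ℂ => ((p.1 : ℂ) * p.2) :=
      (Complex.continuous_ofReal.comp continuous_fst).mul continuous_snd
    exact (hgc.comp hm).add (continuous_snd.mul ((hdc.comp hm).mul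
      (Complex.continuous_ofReal.comp continuous_fst)))
  obtain ⟨C, hC⟩ := (((isCompact_Icc (a := (0:ℝ)) (b := 1)).prod
    (isCompact_closedBall z₀ 1))).exists_bound_of_continuousOn hcont2.continuousOn
  have hFxcont : ∀ x : ℂ, Continuous fun t : ℝ => x * gg h ((t : ℂ) * x) := fun x =>
    continuous_const.mul (hgc.comp (Complex.continuous_ofReal.mul continuous_const))
  have hF'cont : Continuous fun t : ℝ => gg h ((t : ℂ) * z₀) + z₀ * (gd h ((t : ℂ) * z₀) * (t : ℂ)) := by
    have hm : Continuous fun t : ℝ => ((t : ℂ) * z₀) :=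
      Complex.continuous_ofReal.mul continuous_const
    exact (hgc.comp hm).add (continuous_const.mul ((hdc.comp hm).mul Complex.continuous_ofReal))
  have hF_meas : ∀ᶠ x in nhds z₀,
      MeasureTheory.AEStronglyMeasurable (fun t : ℝ => x * gg h ((t : ℂ) * x))
        (MeasureTheory.volume.restrict (Set.uIoc (0:ℝ) 1)) :=
    Filter.Eventually.of_forall fun x => (hFxcont x).aestronglyMeasurable
  have hF_int : IntervalIntegrable (fun t : ℝ => z₀ * gg h ((t : ℂ) * z₀))
      MeasureTheory.volume 0 1 := (hFxcont z₀).intervalIntegrable 0 1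
  have hF'_meas : MeasureTheory.AEStronglyMeasurable
      (fun t : ℝ => gg h ((t : ℂ) * z₀) + z₀ * (gd h ((t : ℂ) * z₀) * (t : ℂ)))
      (MeasureTheory.volume.restrict (Set.uIoc (0:ℝ) 1)) := hF'cont.aestronglyMeasurable
  have h_bound : ∀ᵐ t ∂(MeasureTheory.volume : MeasureTheory.Measure ℝ), t ∈ Set.uIoc (0:ℝ) 1 →
      ∀ x ∈ ball z₀ 1, ‖gg h ((t : ℂ) * x) + x * (gd h ((t : ℂ) * x) * (t : ℂ))‖ ≤ C := by
    filter_upwards with t ht x hx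
    have ht' : t ∈ Icc (0:ℝ) 1 := by
      rw [uIoc_of_le (zero_le_one)] at ht
      exact ⟨le_of_lt ht.1, ht.2⟩
    exact hC ((t, x)) ⟨ht', ball_subset_closedBall hx⟩
  have bound_int : IntervalIntegrable (fun _ : ℝ => C) MeasureTheory.volume 0 1 :=
    intervalIntegrable_const
  have h_diff : ∀ᵐ t ∂(MeasureTheory.volume : MeasureTheory.Measure ℝ), t ∈ Set.uIoc (0:ℝ) 1 →
      ∀ x ∈ ball z₀ 1, HasDerivAt (fun x => x * gg h ((t : ℂ) * x))
        (gg h ((t : ℂ) * x) + x * (gd h ((t : ℂ) * x) * (t : ℂ))) x := by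
    filter_upwards with t ht x hx
    have h1 : HasDerivAt (fun z : ℂ => (t : ℂ) * z) (t : ℂ) x := by
      simpa using (hasDerivAt_id x).const_mul (t : ℂ)
    have h2 : HasDerivAt (fun z : ℂ => gg h ((t : ℂ) * z)) (gd h ((t : ℂ) * x) * (t : ℂ)) x :=
      HasDerivAt.comp x (gg_hasDerivAt hsmooth hharm ((t : ℂ) * x)) h1
    have h3 := (hasDerivAt_id x).fun_mul h2
    simpa using h3
  have key := intervalIntegral.hasDerivAt_integral_of_dominated_loc_of_deriv_le
    (F := fun z t => z * gg h ((t : ℂ) * z))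
    (F' := fun z t => gg h ((t : ℂ) * z) + z * (gd h ((t : ℂ) * z) * (t : ℂ)))
    (ball_mem_nhds z₀ one_pos) hF_meas hF_int hF'_meas h_bound bound_int h_diff
  obtain ⟨hint, hderiv⟩ := key
  -- compute the integral of F' z₀ via FTC
  have hψ : ∀ t ∈ uIcc (0:ℝ) 1, HasDerivAt (fun t : ℝ => (t : ℂ) * gg h ((t : ℂ) * z₀))
      (gg h ((t : ℂ) * z₀) + (t : ℂ) * (z₀ * gd h ((t : ℂ) * z₀))) t := by
    intro t _
    have ho : HasDerivAt (fun t : ℝ => (t : ℂ)) 1 t := by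
      simpa using (hasDerivAt_id t).ofReal_comp
    have hin : HasDerivAt (fun t : ℝ => (t : ℂ) * z₀) z₀ t := by
      simpa using ho.mul_const z₀
    have hcomp : HasDerivAt (fun t : ℝ => gg h ((t : ℂ) * z₀)) (z₀ • gd h ((t : ℂ) * z₀)) t :=
      by have := (gg_hasDerivAt hsmooth hharm ((t : ℂ) * z₀)).scomp t hin; exact this
    have := ho.fun_mul hcomp
    simpa [smul_eq_mul, mul_comm, mul_left_comm, mul_assoc] using this
  have hFTC : (∫ t in (0:ℝ)..1, (gg h ((t : ℂ) * z₀) + (t : ℂ) * (z₀ * gd h ((t : ℂ) * z₀))))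
      = gg h z₀ := by
    have hcont3 : Continuous fun t : ℝ => gg h ((t : ℂ) * z₀) + (t : ℂ) * (z₀ * gd h ((t : ℂ) * z₀)) := by
      have hm : Continuous fun t : ℝ => ((t : ℂ) * z₀) :=
        Complex.continuous_ofReal.mul continuous_const
      exact (hgc.comp hm).add (Complex.continuous_ofReal.mul (continuous_const.mul (hdc.comp hm)))
    have := intervalIntegral.integral_eq_sub_of_hasDerivAt hψ (hcont3.intervalIntegrable 0 1)
    simpa using this
  have heq : (∫ t in (0:ℝ)..1, (gg h ((t : ℂ) * z₀) + z₀ * (gd h ((t : ℂ) * z₀) * (t : ℂ))))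
      = gg h z₀ := by
    rw [← hFTC]
    apply intervalIntegral.integral_congr
    intro t _
    ring
  rw [heq] at hderiv
  exact hderiv.add_const _

lemma ff_differentiable : Differentiable ℂ (ff h) :=
  fun z => (ff_hasDerivAt hsmooth hharm z).differentiableAt

lemma ff_re (z : ℂ) : (ff h z).re = HH h z := by
  -- the function (ff h ·).re - HH h has zero derivative
  have hHdiff : Differentiable ℝ (HH h) := (HH_smooth hsmooth).differentiable (by simp)
  have key : ∀ w : ℂ, HasFDerivAt (fun z => (ff h z).re - HH h z) (0 : ℂ →L[ℝ] ℝ) w := by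
    intro w
    have h1 : HasFDerivAt (ff h)
        (((1 : ℂ →L[ℂ] ℂ).smulRight (gg h w)).restrictScalars ℝ) w :=
      (hasDerivAt_iff_hasFDerivAt.1 (ff_hasDerivAt hsmooth hharm w)).restrictScalars ℝ
    have h2 : HasFDerivAt (fun z => (ff h z).re)
        (Complex.reCLM.comp (((1 : ℂ →L[ℂ] ℂ).smulRight (gg h w)).restrictScalars ℝ)) w :=
      Complex.reCLM.hasFDerivAt.comp w h1
    have h3 : HasFDerivAt (HH h) (fderiv ℝ (HH h) w) w := (hHdiff w).hasFDerivAt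
    have h4 := h2.sub h3
    have h5 : Complex.reCLM.comp (((1 : ℂ →L[ℂ] ℂ).smulRight (gg h w)).restrictScalars ℝ)
        - fderiv ℝ (HH h) w = 0 := by
      ext u
      have e1 : fderiv ℝ (HH h) w u
          = u.re * fderiv ℝ (HH h) w 1 + u.im * fderiv ℝ (HH h) w Complex.I := by
        have hu : u = (u.re : ℝ) • (1 : ℂ) + (u.im : ℝ) • Complex.I := by
          simp [Complex.real_smul, Complex.re_add_im]
        conv_lhs => rw [hu]
        simp only [map_add, map_smul, smul_eq_mul]
      have e2 : (u * gg h w).re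
          = u.re * fderiv ℝ (HH h) w 1 + u.im * fderiv ℝ (HH h) w Complex.I := by
        unfold gg
        simp only [Complex.mul_re, Complex.sub_re, Complex.sub_im, Complex.ofReal_re,
          Complex.ofReal_im, Complex.mul_im, Complex.I_re, Complex.I_im]
        ring
      have e0 : ((((1 : ℂ →L[ℂ] ℂ).smulRight (gg h w)).restrictScalars ℝ) u) = u * gg h w := by
        simp
      simp only [ContinuousLinearMap.sub_apply, ContinuousLinearMap.comp_apply,
        Complex.reCLM_apply, ContinuousLinearMap.zero_apply]
      rw [e0, e2, e1]
      ring
    rw [h5] at h4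
    exact h4
  have hconst := is_const_of_fderiv_eq_zero (𝕜 := ℝ)
    (fun w => (key w).differentiableAt) (fun w => (key w).fderiv) z 0
  have hff0 : ff h 0 = ((HH h 0 : ℝ) : ℂ) := by
    unfold ff
    simp
  have : (ff h z).re - HH h z = (ff h 0).re - HH h 0 := hconst
  rw [hff0] at this
  simp at this
  linarith

end primitive

/-- A nonzero entire harmonic function on the plane has no nodal ovals;
in particular its nodal set contains no double nest. -/
theorem stmt_5 (h : Plane → ℝ) (hne : h ≠ 0)
    (hsmooth : ContDiff ℝ (⊤ : ℕ∞) h) (hharm : ∀ x, lap h x = 0) :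
    (∀ γ : Set Plane, ¬ IsNodalOval h γ) ∧
      (∀ γin γout : Set Plane, ¬ IsDoubleNest h γin γout) := by
  have key : ∀ γ : Set Plane, ¬ IsNodalOval h γ := by
    intro γ hov
    obtain ⟨⟨x0, hx0Z, hγ⟩, ⟨φ⟩⟩ := hov
    have hZc : IsClosed (h ⁻¹' {0}) := isClosed_singleton.preimage hsmooth.continuous
    have hγcs : CompactSpace γ := φ.symm.compactSpace
    have hγcomp : IsCompact (connectedComponentIn (h ⁻¹' {0}) x0) := by
      rw [← hγ]; exact isCompact_iff_compactSpace.2 hγcs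
    obtain ⟨U, hUo, hUb, hxU, hfr⟩ := part1' hZc hx0Z hγcomp
    -- transfer to ℂ
    have hFd : Differentiable ℂ (ff h) := ff_differentiable hsmooth hharm
    have hU'o : IsOpen (⇑eCLE ⁻¹' U) := hUo.preimage eCLE.continuous
    have hU'b : IsBounded (⇑eCLE ⁻¹' U) := by
      obtain ⟨r, hr⟩ := hUb.subset_ball (0 : Plane)
      refine (isBounded_ball (x := (0:ℂ)) (r := r)).subset fun z hz => ?_
      rw [mem_ball_zero_iff, ← eCLE_norm z]
      exact mem_ball_zero_iff.1 (hr hz)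
    have hpU' : eCLE.symm x0 ∈ ⇑eCLE ⁻¹' U := by
      simp only [mem_preimage, ContinuousLinearEquiv.apply_symm_apply]
      exact hxU
    have hre0 : (ff h (eCLE.symm x0)).re = 0 := by
      rw [ff_re hsmooth hharm]
      show h (eCLE (eCLE.symm x0)) = 0
      rw [ContinuousLinearEquiv.apply_symm_apply]
      simpa using hx0Z
    have hfr' : ∀ z ∈ frontier (⇑eCLE ⁻¹' U), (ff h z).re ≠ 0 := by
      intro z hz
      have hfront : eCLE z ∈ frontier U := by
        have := eCLE.toHomeomorph.preimage_frontier U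
        rw [ContinuousLinearEquiv.coe_toHomeomorph] at this
        rw [← this] at hz
        exact hz
      have := hfr (eCLE z) hfront
      rw [ff_re hsmooth hharm]
      intro hzero
      exact this hzero
    exact lemC (ff h) hFd hU'o hU'b hpU' hre0 hfr'
  exact ⟨key, fun γin γout hdn => key γin hdn.1⟩
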